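/- arXiv:1206.6661 — 4 statements merged into one kernel-verified Lean document; each statement's English description precedes it below -/
import Mathlib

section
/- Let K be a field, C a subfield of K, and A an n×n matrix with entries in K. Suppose A = Σ_{i=1}^r a_i M_i and A = Σ_{j=1}^r b_j N_j are two Wei–Norman decompositions of A with respect to C, i.e. (a_i) and (b_j) are both C-bases of the C-linear span of the entries of A, and M_i, N_j are n×n matrices over C. Then the C-linear span of {M₁,…,M_r} equals the C-linear span of {N₁,…,N_r} inside the space of n×n matrices over C. -/
theorem weiNorman_aux
    {K C : Type*} [Field K] [Field C] [Algebra C K]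
    {n r : ℕ}
    (a b : Fin r → K)
    (M N : Fin r → Matrix (Fin n) (Fin n) C)
    (hlia : LinearIndependent C a)
    (hab : Submodule.span C (Set.range b) ≤ Submodule.span C (Set.range a))
    (heq : ∑ i, a i • (M i).map (algebraMap C K)
        = ∑ j, b j • (N j).map (algebraMap C K)) :
    Submodule.span C (Set.range M) ≤ Submodule.span C (Set.range N) := by
  classical
  have hP : ∀ j, ∃ P : Fin r → C, ∑ k, P k • a k = b j := by
    intro j
    have : b j ∈ Submodule.span C (Set.range a) :=
      hab (Submodule.subset_span (Set.mem_range_self j))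
    rwa [Submodule.mem_span_range_iff_exists_fun] at this
  choose P hPb using hP
  have key : ∀ k, M k = ∑ j, P j k • N j := by
    intro k
    ext i i'
    have h1 : ∑ k, (M k i i') • a k = ∑ j, (N j i i') • b j := by
      have := congrFun (congrFun heq i) i'
      simp only [Matrix.sum_apply, Matrix.smul_apply, Matrix.map_apply,
        smul_eq_mul] at this
      calc ∑ k, (M k i i') • a k
          = ∑ k, a k * algebraMap C K (M k i i') := by
            simp [Algebra.smul_def, mul_comm]
        _ = ∑ j, b j * algebraMap C K (N j i i') := this
        _ = ∑ j, (N j i i') • b j := by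
            simp [Algebra.smul_def, mul_comm]
    have h2 : ∑ k, (M k i i') • a k
        = ∑ k', (∑ j, P j k' * N j i i') • a k' := by
      rw [h1]
      simp only [← hPb, Finset.smul_sum, smul_smul]
      rw [Finset.sum_comm]
      refine Finset.sum_congr rfl fun k' _ => ?_
      rw [← Finset.sum_smul]
      congr 1
      exact Finset.sum_congr rfl fun j _ => mul_comm _ _
    have h3 : ∑ k', (M k' i i' - ∑ j, P j k' * N j i i') • a k' = 0 := by
      simp only [sub_smul, Finset.sum_sub_distrib, h2, sub_self]
    have := Fintype.linearIndependent_iff.mp hlia _ h3 k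
    have : M k i i' = ∑ j, P j k * N j i i' := sub_eq_zero.mp this
    simpa [Matrix.sum_apply, Matrix.smul_apply, smul_eq_mul] using this
  intro x hx
  refine Submodule.span_le.mpr ?_ hx
  rintro _ ⟨k, rfl⟩
  rw [key k]
  exact Submodule.sum_mem _ fun j _ =>
    Submodule.smul_mem _ _ (Submodule.subset_span (Set.mem_range_self j))



/-- **The span of the coefficient matrices of a Wei–Norman decomposition is
independent of the choice of decomposition.**  Let `K` be a field, `C` a
subfield of `K`, and `A` an `n × n` matrix over `K`.  If
`A = ∑ i, a i • M i` and `A = ∑ j, b j • N j` are two Wei–Norman decompositions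
of `A` with respect to `C` (so `(a i)` and `(b j)` are `C`-bases of the
`C`-span of the entries of `A`, and the `M i`, `N j` are matrices over `C`),
then `span_C {M 1, …, M r} = span_C {N 1, …, N r}` inside `Mat(n, C)`. -/
theorem weiNorman_span_independent
    {K C : Type*} [Field K] [Field C] [Algebra C K]
    {n r : ℕ} (A : Matrix (Fin n) (Fin n) K)
    (a b : Fin r → K)
    (M N : Fin r → Matrix (Fin n) (Fin n) C)
    (hlia : LinearIndependent C a)
    (hspana : Submodule.span C (Set.range a) =
      Submodule.span C {x : K | ∃ i j, A i j = x})
    (hlib : LinearIndependent C b)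
    (hspanb : Submodule.span C (Set.range b) =
      Submodule.span C {x : K | ∃ i j, A i j = x})
    (hM : A = ∑ i, a i • (M i).map (algebraMap C K))
    (hN : A = ∑ j, b j • (N j).map (algebraMap C K)) :
    Submodule.span C (Set.range M) = Submodule.span C (Set.range N) :=
  le_antisymm
    (weiNorman_aux a b M N hlia (by rw [hspanb, hspana]) (hM.symm.trans hN))
    (weiNorman_aux b a N M hlib (by rw [hspana, hspanb]) (hN.symm.trans hM))
end

section
/- Let K be a field and C a subfield of K. Let f₁,…,f_r ∈ K be linearly independent over C, let A₁,…,A_r be n×n matrices with entries in C, and set A := Σ_{i=1}^r f_i • A_i, an n×n matrix over K. Suppose w ∈ Cⁿ is a nonzero vector and f ∈ K satisfies A·w = f·w (viewing w as a vector in Kⁿ). Then there exist constants a₁,…,a_r ∈ C such that A_i·w = a_i·w for every i, and moreover f = Σ_{i=1}^r a_i f_i; in particular f lies in the C-span of f₁,…,f_r. -/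
/-- **A constant eigenvector of a Wei–Norman decomposed matrix is an eigenvector
of each coefficient matrix** (Lemma `crucial_for_criterion1` of the paper).
Let `K` be a field and `C` a subfield of `K`.  Let `f 1, …, f r ∈ K` be linearly
independent over `C`, let `A 1, …, A r` be `n × n` matrices over `C` and set
`A := ∑ i, f i • A i` (a matrix over `K`).  If `w ∈ Cⁿ` is a nonzero vector and
`fval ∈ K` satisfies `A ⬝ w = fval • w` (viewing `w` over `K`), then there are
constants `c 1, …, c r ∈ C` with `A i ⬝ w = c i • w` for every `i`, and
`fval = ∑ i, c i * f i`; in particular `fval` lies in the `C`-span of the `f i`. -/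
theorem constant_eigenvector_of_weiNorman
    {K C : Type*} [Field K] [Field C] [Algebra C K]
    {n r : ℕ} (f : Fin r → K) (hf : LinearIndependent C f)
    (A : Fin r → Matrix (Fin n) (Fin n) C)
    (w : Fin n → C) (hw : w ≠ 0) (fval : K)
    (heig : (∑ i, f i • (A i).map (algebraMap C K)).mulVec
        (fun j => algebraMap C K (w j)) = fval • fun j => algebraMap C K (w j)) :
    ∃ c : Fin r → C,
      (∀ i, (A i).mulVec w = c i • w) ∧
      fval = ∑ i, algebraMap C K (c i) * f i ∧
      fval ∈ Submodule.span C (Set.range f) := by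
  obtain ⟨j, hj⟩ : ∃ j, w j ≠ 0 := by
    by_contra h
    push_neg at h
    exact hw (funext h)
  -- rewrite eigen equation componentwise
  have key : ∀ k, ∑ i, f i * algebraMap C K ((A i).mulVec w k)
      = fval * algebraMap C K (w k) := by
    intro k
    have h := congrFun heig k
    simp only [Matrix.mulVec, dotProduct, Finset.sum_apply, Matrix.sum_apply, Matrix.smul_apply,
      Matrix.map_apply, smul_eq_mul, Finset.sum_mul, Pi.smul_apply] at h
    rw [← h, Finset.sum_comm]
    simp [Matrix.mulVec, dotProduct, map_sum, Finset.mul_sum, mul_assoc]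
  set c : Fin r → C := fun i => (A i).mulVec w j / w j with hc
  have hfval : fval = ∑ i, algebraMap C K (c i) * f i := by
    have hj' : algebraMap C K (w j) ≠ 0 := by
      simpa using (map_ne_zero (algebraMap C K)).2 hj
    have h2 : fval = (∑ i, f i * algebraMap C K ((A i).mulVec w j)) / algebraMap C K (w j) := by
      rw [key j, mul_div_cancel_right₀ _ hj']
    rw [h2, Finset.sum_div]
    refine Finset.sum_congr rfl fun i _ => ?_
    rw [hc]
    simp only [map_div₀]
    ring
  have hzero : ∀ k i, (A i).mulVec w k - c i * w k = 0 := by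
    intro k
    have hsum : ∑ i, ((A i).mulVec w k - c i * w k) • f i = 0 := by
      have := key k
      rw [hfval, Finset.sum_mul] at this
      calc ∑ i, ((A i).mulVec w k - c i * w k) • f i
          = ∑ i, (f i * algebraMap C K ((A i).mulVec w k)
              - algebraMap C K (c i) * f i * algebraMap C K (w k)) := by
            refine Finset.sum_congr rfl fun i _ => ?_
            rw [Algebra.smul_def, map_sub, map_mul, sub_mul]
            ring
        _ = 0 := by rw [Finset.sum_sub_distrib, this, sub_self]
    exact Fintype.linearIndependent_iff.1 hf _ hsum
  have heach : ∀ i, (A i).mulVec w = c i • w := by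
    intro i
    funext k
    have := hzero k i
    simpa [sub_eq_zero] using this
  refine ⟨c, heach, hfval, ?_⟩
  rw [hfval]
  exact Submodule.sum_mem _ fun i _ => by
    rw [← Algebra.smul_def]
    exact Submodule.smul_mem _ _ (Submodule.subset_span ⟨i, rfl⟩)
end

section
/- Let K be a differential field with derivation ∂ and field of constants C := {c ∈ K : ∂c = 0}. Extend ∂ to the polynomial ring K[X₁,…,Xₙ] coefficientwise. Let A and U be n×n matrices over K with ∂U = A·U (entrywise). Let σ_U be the K-algebra endomorphism of K[X₁,…,Xₙ] determined by σ_U(X_j) = Σ_{i=1}^n U_{ij} X_i, and let D_A be the K-linear derivation of K[X₁,…,Xₙ] determined by D_A(X_j) = Σ_{i=1}^n A_{ij} X_i. Then for every polynomial P ∈ K[X₁,…,Xₙ] all of whose coefficients lie in C, one has ∂(σ_U(P)) = D_A(σ_U(P)). -/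
open MvPolynomial

noncomputable def dmapAux {K : Type*} [CommRing K] {σ : Type*} (δ : Derivation ℤ K K) :
    MvPolynomial σ K →ₗ[ℤ] MvPolynomial σ K :=
  AddMonoidHom.toIntLinearMap
    { toFun := AddMonoidAlgebra.map (δ : K →ₗ[ℤ] K).toAddMonoidHom
      map_zero' := AddMonoidAlgebra.map_zero _
      map_add' := AddMonoidAlgebra.map_add _ }

lemma coeff_dmapAux {K : Type*} [CommRing K] {σ : Type*} (δ : Derivation ℤ K K)
    (p : MvPolynomial σ K) (m : σ →₀ ℕ) : (dmapAux δ p).coeff m = δ (p.coeff m) := rfl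

noncomputable def dmapDer {K : Type*} [CommRing K] {σ : Type*} (δ : Derivation ℤ K K) :
    Derivation ℤ (MvPolynomial σ K) (MvPolynomial σ K) where
  toLinearMap := dmapAux δ
  map_one_eq_zero' := by
    classical
    apply MvPolynomial.ext
    intro m
    rw [show (dmapAux δ (1 : MvPolynomial σ K)).coeff m = δ ((1:MvPolynomial σ K).coeff m) from rfl,
      MvPolynomial.coeff_one]
    split <;> simp
  leibniz' p q := by
    classical
    simp only [smul_eq_mul]
    apply MvPolynomial.ext
    intro m
    rw [coeff_dmapAux, MvPolynomial.coeff_add, MvPolynomial.coeff_mul, MvPolynomial.coeff_mul,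
      MvPolynomial.coeff_mul, map_sum]
    have h2 : ∑ x ∈ Finset.HasAntidiagonal.antidiagonal m, coeff x.1 q * (dmapAux δ p).coeff x.2
        = ∑ x ∈ Finset.HasAntidiagonal.antidiagonal m, coeff x.2 q * (dmapAux δ p).coeff x.1 := by
      rw [← Finset.HasAntidiagonal.map_swap_antidiagonal, Finset.sum_map]
      simp
    rw [h2, ← Finset.sum_add_distrib]
    apply Finset.sum_congr rfl
    intro x _
    rw [Derivation.leibniz, coeff_dmapAux, coeff_dmapAux]
    simp only [smul_eq_mul]

/-- **`Sym^m(U)' = sym^m(A) · Sym^m(U)` on polynomials:** if `δU = A·U` and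
`P ∈ K[X₁,…,Xₙ]` has constant coefficients (each coefficient is killed by the
derivation `δ`), then the coefficientwise derivative of `σ_U(P)` equals
`D_A(σ_U(P))`, where `σ_U` is the `K`-algebra endomorphism with
`σ_U (X j) = ∑ i, U i j • X i` and `D_A` is the `K`-linear derivation with
`D_A (X j) = ∑ i, A i j • X i`. -/
theorem deriv_sigma_eq_D_of_constant_coeffs
    {K : Type*} [Field K] (δ : Derivation ℤ K K)
    {n : ℕ} (A U : Matrix (Fin n) (Fin n) K)
    (hU : U.map δ = A * U)
    (P : MvPolynomial (Fin n) K)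
    (hP : ∀ m : Fin n →₀ ℕ, δ (P.coeff m) = 0) :
    ∀ m : Fin n →₀ ℕ,
      δ (((MvPolynomial.aeval
            (fun j => ∑ i, MvPolynomial.C (U i j) * X i)) P).coeff m) =
      ((MvPolynomial.mkDerivation K
            (fun j => ∑ i, MvPolynomial.C (A i j) * X i))
          ((MvPolynomial.aeval
            (fun j => ∑ i, MvPolynomial.C (U i j) * X i)) P)).coeff m := by
  classical
  set f : Fin n → MvPolynomial (Fin n) K := fun j => ∑ i, C (U i j) * X i with hf
  set g : Fin n → MvPolynomial (Fin n) K := fun j => ∑ i, C (A i j) * X i with hg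
  set D : Derivation ℤ (MvPolynomial (Fin n) K) (MvPolynomial (Fin n) K) :=
    (MvPolynomial.mkDerivation K g).restrictScalars ℤ with hD
  set E : Derivation ℤ (MvPolynomial (Fin n) K) (MvPolynomial (Fin n) K) :=
    dmapDer δ - D with hE
  -- dmapDer on C a * X i
  have dCX : ∀ (a : K) (i : Fin n), dmapDer δ (C a * X i) = C (δ a) * X i := by
    intro a i
    apply MvPolynomial.ext
    intro m
    rw [show (dmapDer δ (C a * X i)).coeff m = δ ((C a * X i).coeff m) from rfl,
      coeff_C_mul, coeff_C_mul, coeff_X']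
    split <;> simp
  have dC : ∀ (a : K), dmapDer δ (C a : MvPolynomial (Fin n) K) = C (δ a) := by
    intro a
    apply MvPolynomial.ext
    intro m
    rw [show (dmapDer δ (C a : MvPolynomial (Fin n) K)).coeff m = δ ((C a : MvPolynomial (Fin n) K).coeff m) from rfl,
      coeff_C, coeff_C]
    split <;> simp
  have EC : ∀ (a : K), δ a = 0 → E (C a) = 0 := by
    intro a ha
    rw [hE, Derivation.sub_apply, dC, ha, map_zero, hD, Derivation.restrictScalars_apply,
      ← MvPolynomial.algebraMap_eq, Derivation.map_algebraMap, sub_zero]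
  -- E kills the f j
  have Ef : ∀ j, E (f j) = 0 := by
    intro j
    rw [hE, Derivation.sub_apply, sub_eq_zero]
    have lhs : dmapDer δ (f j) = ∑ i, C ((A * U) i j) * X i := by
      rw [hf, map_sum]
      refine Finset.sum_congr rfl fun i _ => ?_
      have h1 : δ (U i j) = (A * U) i j := by
        have := congrFun (congrFun hU i) j
        rwa [Matrix.map_apply] at this
      rw [dCX, h1]
    rw [lhs, hD, Derivation.restrictScalars_apply, hf, map_sum]
    have rhs : ∀ i, (MvPolynomial.mkDerivation K g) (C (U i j) * X i)
        = ∑ k, C (A k i * U i j) * X k := by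
      intro i
      rw [← MvPolynomial.smul_eq_C_mul, Derivation.map_smul, mkDerivation_X, hg,
        Finset.smul_sum]
      refine Finset.sum_congr rfl fun k _ => ?_
      rw [MvPolynomial.smul_eq_C_mul, ← mul_assoc, ← C_mul, mul_comm (U i j)]
    simp only [rhs]
    rw [Finset.sum_comm]
    refine Finset.sum_congr rfl fun i _ => ?_
    rw [Matrix.mul_apply, map_sum, Finset.sum_mul]
  -- E kills powers and products of f j's
  have Epow : ∀ (j : Fin n) (k : ℕ), E (f j ^ k) = 0 := by
    intro j k
    rw [Derivation.leibniz_pow, Ef, smul_zero, smul_zero]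
  have Eprod : ∀ m : Fin n →₀ ℕ, E (m.prod fun i k => f i ^ k) = 0 := by
    intro m
    refine Finset.prod_induction _ (fun x => E x = 0) ?_ (Derivation.map_one_eq_zero E) ?_
    · intro a b ha hb
      rw [Derivation.leibniz, ha, hb, smul_zero, smul_zero, add_zero]
    · intro i _
      exact Epow i (m i)
  -- E kills aeval f P
  have EP : E (MvPolynomial.aeval f P) = 0 := by
    conv_lhs => rw [P.as_sum]
    rw [map_sum, map_sum]
    refine Finset.sum_eq_zero fun m _ => ?_
    rw [MvPolynomial.aeval_monomial, MvPolynomial.algebraMap_eq, Derivation.leibniz,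
      EC _ (hP m), Eprod, smul_zero, smul_zero, add_zero]
  intro m
  rw [hE, Derivation.sub_apply, sub_eq_zero] at EP
  have := congrArg (MvPolynomial.coeff m) EP
  rw [show (dmapDer δ (MvPolynomial.aeval f P)).coeff m
      = δ ((MvPolynomial.aeval f P).coeff m) from rfl, hD,
    Derivation.restrictScalars_apply] at this
  exact this
end

section
/- Let K be a differential field with derivation ∂, extended entrywise to matrices over K and coefficientwise to the polynomial ring K[X₁,…,Xₙ]. Let A be an n×n matrix over K, P an invertible n×n matrix over K, and B := P⁻¹·(A·P − ∂P). For an n×n matrix M over K let σ_M be the K-algebra endomorphism of K[X₁,…,Xₙ] with σ_M(X_j) = Σ_{i=1}^n M_{ij} X_i, and D_M the K-linear derivation with D_M(X_j) = Σ_{i=1}^n M_{ij} X_i. Then for every Q ∈ K[X₁,…,Xₙ]: D_B(Q) = σ_{P⁻¹}( D_A(σ_P(Q)) − ∂(σ_P(Q)) + σ_P(∂Q) ). (In matrix form on homogeneous polynomials of degree m this is the identity sym^m(P[A]) = Sym^m(P)[sym^m(A)].) -/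
open MvPolynomial

/-- The coefficientwise extension of a derivation `δ` of `K` to the polynomial
ring `K[X₁,…,Xₙ]`: the polynomial whose coefficient at each monomial `m` is
`δ` of the coefficient of `Q` at `m`. -/
noncomputable def coeffwiseDeriv {K : Type*} [Field K] (δ : Derivation ℤ K K)
    {n : ℕ} (Q : MvPolynomial (Fin n) K) : MvPolynomial (Fin n) K :=
  ∑ m ∈ Q.support, MvPolynomial.monomial m (δ (Q.coeff m))

/-- For an `n × n` matrix `M` over `K`, the `K`-algebra endomorphism `σ_M` of
`K[X₁,…,Xₙ]` determined by `σ_M (X j) = ∑ i, M i j • X i`. -/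
noncomputable def matSubst {K : Type*} [Field K] {n : ℕ}
    (M : Matrix (Fin n) (Fin n) K) :
    MvPolynomial (Fin n) K →ₐ[K] MvPolynomial (Fin n) K :=
  MvPolynomial.aeval (fun j => ∑ i, MvPolynomial.C (M i j) * X i)

/-- For an `n × n` matrix `M` over `K`, the `K`-linear derivation `D_M` of
`K[X₁,…,Xₙ]` determined by `D_M (X j) = ∑ i, M i j • X i`. -/
noncomputable def matDeriv {K : Type*} [Field K] {n : ℕ}
    (M : Matrix (Fin n) (Fin n) K) :
    Derivation K (MvPolynomial (Fin n) K) (MvPolynomial (Fin n) K) :=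
  MvPolynomial.mkDerivation K (fun j => ∑ i, MvPolynomial.C (M i j) * X i)

section GaugeAux

variable {K : Type*} [Field K] {n : ℕ} (δ : Derivation ℤ K K)

lemma coeff_coeffwiseDeriv (Q : MvPolynomial (Fin n) K) (m : Fin n →₀ ℕ) :
    (coeffwiseDeriv δ Q).coeff m = δ (Q.coeff m) := by
  unfold coeffwiseDeriv
  rw [MvPolynomial.coeff_sum]
  simp only [coeff_monomial]
  rw [Finset.sum_ite_eq' Q.support m (fun m' => δ (Q.coeff m'))]
  split_ifs with h
  · rfl
  · rw [MvPolynomial.notMem_support_iff.mp h, map_zero]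

lemma coeffwiseDeriv_add (p q : MvPolynomial (Fin n) K) :
    coeffwiseDeriv δ (p + q) = coeffwiseDeriv δ p + coeffwiseDeriv δ q := by
  ext m; simp [coeff_coeffwiseDeriv]

lemma coeffwiseDeriv_monomial (m : Fin n →₀ ℕ) (a : K) :
    coeffwiseDeriv δ (monomial m a) = monomial m (δ a) := by
  ext m'
  rw [coeff_coeffwiseDeriv]
  simp only [coeff_monomial]
  split_ifs <;> simp

lemma coeffwiseDeriv_mul (p q : MvPolynomial (Fin n) K) :
    coeffwiseDeriv δ (p * q) = coeffwiseDeriv δ p * q + p * coeffwiseDeriv δ q := by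
  ext m
  rw [coeff_coeffwiseDeriv, coeff_mul, map_sum, coeff_add, coeff_mul, coeff_mul,
    ← Finset.sum_add_distrib]
  refine Finset.sum_congr rfl fun x _ => ?_
  rw [Derivation.leibniz, smul_eq_mul, smul_eq_mul, coeff_coeffwiseDeriv, coeff_coeffwiseDeriv]
  ring

lemma coeffwiseDeriv_C (a : K) : coeffwiseDeriv δ (C a : MvPolynomial (Fin n) K) = C (δ a) := by
  rw [C_apply, coeffwiseDeriv_monomial, C_apply]

lemma coeffwiseDeriv_X (j : Fin n) : coeffwiseDeriv δ (X j : MvPolynomial (Fin n) K) = 0 := by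
  rw [X, coeffwiseDeriv_monomial]
  simp

lemma coeffwiseDeriv_sum {ι : Type*} (s : Finset ι) (f : ι → MvPolynomial (Fin n) K) :
    coeffwiseDeriv δ (∑ i ∈ s, f i) = ∑ i ∈ s, coeffwiseDeriv δ (f i) := by
  ext m
  rw [coeff_coeffwiseDeriv, MvPolynomial.coeff_sum, map_sum, MvPolynomial.coeff_sum]
  exact Finset.sum_congr rfl fun i _ => (coeff_coeffwiseDeriv δ (f i) m).symm

/-- The linear polynomial `∑ i, c i • X i`. -/
noncomputable def linPoly (c : Fin n → K) : MvPolynomial (Fin n) K := ∑ i, C (c i) * X i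

lemma linPoly_sub (c d : Fin n → K) : linPoly (c - d) = linPoly c - linPoly d := by
  simp [linPoly, sub_mul, Finset.sum_sub_distrib]

lemma coeffwiseDeriv_linPoly (c : Fin n → K) :
    coeffwiseDeriv δ (linPoly c) = linPoly (fun i => δ (c i)) := by
  rw [linPoly, coeffwiseDeriv_sum, linPoly]
  refine Finset.sum_congr rfl fun i _ => ?_
  rw [coeffwiseDeriv_mul, coeffwiseDeriv_C, coeffwiseDeriv_X, mul_zero, add_zero]

lemma key_sum (M : Matrix (Fin n) (Fin n) K) (c : Fin n → K) :
    ∑ k, C (c k) * (∑ i, C (M i k) * X i) = linPoly (M.mulVec c) := by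
  unfold linPoly
  simp_rw [Finset.mul_sum]
  rw [Finset.sum_comm]
  refine Finset.sum_congr rfl fun i _ => ?_
  rw [show M.mulVec c i = ∑ k, M i k * c k from rfl, map_sum, Finset.sum_mul]
  refine Finset.sum_congr rfl fun k _ => ?_
  rw [map_mul]; ring

lemma matSubst_X (M : Matrix (Fin n) (Fin n) K) (j : Fin n) :
    matSubst M (X j) = linPoly (fun i => M i j) := aeval_X _ _

lemma matSubst_C (M : Matrix (Fin n) (Fin n) K) (a : K) :
    matSubst M (C a) = C a := by
  simp [matSubst, MvPolynomial.algebraMap_eq]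

lemma matSubst_linPoly (M : Matrix (Fin n) (Fin n) K) (c : Fin n → K) :
    matSubst M (linPoly c) = linPoly (M.mulVec c) := by
  rw [linPoly, map_sum, ← key_sum M c]
  refine Finset.sum_congr rfl fun k _ => ?_
  rw [map_mul, matSubst_C, matSubst_X, linPoly]

lemma matDeriv_X (M : Matrix (Fin n) (Fin n) K) (j : Fin n) :
    matDeriv M (X j) = linPoly (fun i => M i j) := mkDerivation_X _ _ _

lemma matDeriv_linPoly (M : Matrix (Fin n) (Fin n) K) (c : Fin n → K) :
    matDeriv M (linPoly c) = linPoly (M.mulVec c) := by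
  rw [linPoly, map_sum, ← key_sum M c]
  refine Finset.sum_congr rfl fun k _ => ?_
  rw [Derivation.leibniz, MvPolynomial.derivation_C, smul_zero, add_zero, smul_eq_mul,
    matDeriv_X, linPoly]

lemma matSubst_matSubst (M N : Matrix (Fin n) (Fin n) K) (Q : MvPolynomial (Fin n) K) :
    matSubst M (matSubst N Q) = matSubst (M * N) Q := by
  have h : (matSubst M).comp (matSubst N) = matSubst (M * N) := by
    apply MvPolynomial.algHom_ext
    intro j
    rw [AlgHom.comp_apply, matSubst_X, matSubst_X, matSubst_linPoly]
    simp [linPoly, Matrix.mulVec, dotProduct, Matrix.mul_apply]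
  exact AlgHom.congr_fun h Q

lemma matSubst_one (Q : MvPolynomial (Fin n) K) :
    matSubst (1 : Matrix (Fin n) (Fin n) K) Q = Q := by
  have h : matSubst (1 : Matrix (Fin n) (Fin n) K) = AlgHom.id K (MvPolynomial (Fin n) K) := by
    apply MvPolynomial.algHom_ext
    intro j
    rw [matSubst_X, AlgHom.id_apply, linPoly]
    simp [Matrix.one_apply]
  rw [h]; rfl

lemma matSubst_inv {P : Matrix (Fin n) (Fin n) K} (hP : IsUnit P.det)
    (Q : MvPolynomial (Fin n) K) : matSubst P⁻¹ (matSubst P Q) = Q := by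
  rw [matSubst_matSubst, Matrix.nonsing_inv_mul _ hP, matSubst_one]

end GaugeAux

/-- **`sym^m(P[A]) = Sym^m(P)[sym^m(A)]` on polynomials.**  Let `K` be a
differential field with derivation `δ`, `A` an `n × n` matrix over `K`, `P`
invertible over `K`, and `B := P⁻¹ * (A * P − δP)` the gauge transform.  Then
for every `Q ∈ K[X₁,…,Xₙ]`,
`D_B(Q) = σ_{P⁻¹}( D_A(σ_P Q) − δ(σ_P Q) + σ_P(δ Q) )`,
the derivation `δ` being applied coefficientwise to polynomials. -/
theorem matDeriv_gauge_transform
    {K : Type*} [Field K] (δ : Derivation ℤ K K)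
    {n : ℕ} (A P : Matrix (Fin n) (Fin n) K) (hP : IsUnit P.det)
    (B : Matrix (Fin n) (Fin n) K)
    (hB : B = P⁻¹ * (A * P - P.map δ)) :
    ∀ Q : MvPolynomial (Fin n) K,
      matDeriv B Q =
        matSubst P⁻¹ (matDeriv A (matSubst P Q)
          - coeffwiseDeriv δ (matSubst P Q)
          + matSubst P (coeffwiseDeriv δ Q)) := by
  set F : MvPolynomial (Fin n) K → MvPolynomial (Fin n) K := fun Q =>
    matSubst P⁻¹ (matDeriv A (matSubst P Q)
      - coeffwiseDeriv δ (matSubst P Q)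
      + matSubst P (coeffwiseDeriv δ Q)) with hF
  suffices key : ∀ Q : MvPolynomial (Fin n) K, matDeriv B Q = F Q by
    intro Q; exact key Q
  have hadd : ∀ p q, F (p + q) = F p + F q := by
    intro p q
    simp only [hF, map_add, coeffwiseDeriv_add, map_sub]
    abel
  have hmul : ∀ p q, F (p * q) = F p * q + p * F q := by
    intro p q
    simp only [hF]
    have h1 : matSubst P p * matDeriv A (matSubst P q)
          + matSubst P q * matDeriv A (matSubst P p)
        - (coeffwiseDeriv δ (matSubst P p) * matSubst P q
          + matSubst P p * coeffwiseDeriv δ (matSubst P q))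
        + matSubst P (coeffwiseDeriv δ p * q + p * coeffwiseDeriv δ q)
        = (matDeriv A (matSubst P p) - coeffwiseDeriv δ (matSubst P p)
            + matSubst P (coeffwiseDeriv δ p)) * matSubst P q
          + matSubst P p * (matDeriv A (matSubst P q) - coeffwiseDeriv δ (matSubst P q)
            + matSubst P (coeffwiseDeriv δ q)) := by
      rw [map_add, map_mul, map_mul]
      ring
    rw [map_mul, Derivation.leibniz, smul_eq_mul, smul_eq_mul,
      coeffwiseDeriv_mul δ (matSubst P p) (matSubst P q), coeffwiseDeriv_mul δ p q, h1,
      map_add, map_mul, map_mul, matSubst_inv hP p, matSubst_inv hP q]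
  have hX : ∀ j, matDeriv B (X j) = F (X j) := by
    intro j
    rw [matDeriv_X, hF]
    simp only
    rw [matSubst_X, matDeriv_linPoly, coeffwiseDeriv_linPoly, coeffwiseDeriv_X, map_zero,
      add_zero, show (fun i => δ (P i j)) = (fun i => (P.map δ) i j) from rfl,
      ← linPoly_sub, matSubst_linPoly]
    congr 1
    funext i
    rw [hB]
    simp [Matrix.mulVec, dotProduct, Matrix.mul_apply, Matrix.sub_apply,
      Matrix.map_apply, mul_sub, Finset.mul_sum, Finset.sum_sub_distrib]
  intro Q
  induction Q using MvPolynomial.induction_on with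
  | C a =>
    rw [MvPolynomial.derivation_C, hF]
    simp [matSubst_C, coeffwiseDeriv_C]
  | add p q hp hq =>
    rw [map_add, hp, hq, ← hadd]
  | mul_X p j hp =>
    rw [Derivation.leibniz, smul_eq_mul, smul_eq_mul, hp, hX j, hmul]
    ring
end
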